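/- Let R be a halidon ring with index m with primitive m-th root of unity ω, let α₁, …, α_{2m} ∈ R, and set u = Σ_{i=1}^m α_i a^{i-1} + Σ_{i=1}^m α_{m+i} a^{i-1}b ∈ R[D_m]. Define, for i = 1, …, m, λ_i = Σ_{r=1}^m α_{m-r+2} ω^{(i-1)(r-1)}, γ_i = Σ_{r=1}^m α_{m+r} ω^{(i-1)(r-1)}, δ_i = Σ_{r=1}^m α_{m+(m-r+2)} ω^{(i-1)(r-1)}, η_i = Σ_{r=1}^m α_r ω^{(i-1)(r-1)}, where the index m−r+2 is reduced modulo m with residue 0 replaced by m. If λ_r η_r − γ_r δ_r is a unit of R for every r = 1, …, m, then u is invertible in R[D_m] and u^{-1} = Σ_{i=1}^m β_i a^{i-1} + Σ_{i=1}^m β_{m+i} a^{i-1}b, where β_i = (1/m) Σ_{r=1}^m η_r (λ_r η_r − γ_r δ_r)^{-1} ω^{(i-1)(r-1)} and β_{m+i} = (1/m) Σ_{r=1}^m (−δ_r) (λ_r η_r − γ_r δ_r)^{-1} ω^{(i-1)(r-1)}. -/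

import Mathlib

open scoped BigOperators

/-- `ω` is a primitive `m`-th root of unity in the halidon sense. -/
def IsHalidonPrimitiveRoot {R : Type*} [CommRing R] (m : ℕ) (ω : R) : Prop :=
  0 < m ∧ ω ^ m = 1 ∧ (∀ k : ℕ, 0 < k → ω ^ k = 1 → m ≤ k) ∧
    ∀ k : ℕ, (∑ r ∈ Finset.range m, ω ^ (r * k)) = if m ∣ k then (m : R) else 0

/-- The element `u = ∑_{i=1}^m α_i a^(i-1) + ∑_{i=1}^m α_{m+i} a^(i-1) b` of `R[D_m]`,
with 0-indexed coefficient functions `A B : ZMod m → R` (`A k = α_{k+1}`, coefficient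
of `a^k`; `B k = α_{m+k+1}`, coefficient of `a^k * b`), where `a = DihedralGroup.r 1`
and `b = DihedralGroup.sr 0`. -/
noncomputable def dihedralElt {R : Type*} [CommRing R] (m : ℕ) [NeZero m]
    (A B : ZMod m → R) : MonoidAlgebra R (DihedralGroup m) :=
  (∑ i : ZMod m, MonoidAlgebra.single (DihedralGroup.r i) (A i)) +
    ∑ i : ZMod m, MonoidAlgebra.single (DihedralGroup.r i * DihedralGroup.sr 0) (B i)

/-- The "forward" Fourier coefficient `η_i = ∑_{r=1}^m α_r ω^((i-1)(r-1))`
(0-indexed: subscript `i ∈ ZMod m` stands for `i + 1`). Applied to the second-half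
coefficients it gives `γ_i = ∑_{r=1}^m α_{m+r} ω^((i-1)(r-1))`. -/
noncomputable def fwdDFT {R : Type*} [CommRing R] (m : ℕ) [NeZero m] (ω : R)
    (A : ZMod m → R) (i : ZMod m) : R :=
  ∑ r : ZMod m, A r * ω ^ (i.val * r.val)

/-- The "reversed" Fourier coefficient `λ_i = ∑_{r=1}^m α_{m-r+2} ω^((i-1)(r-1))`,
the index `m-r+2` being reduced mod `m` with residue `0` replaced by `m`
(0-indexed: the coefficient index `m-r+2` becomes `-r`). Applied to the second-half
coefficients it gives `δ_i = ∑_{r=1}^m α_{m+(m-r+2)} ω^((i-1)(r-1))`. -/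
noncomputable def revDFT {R : Type*} [CommRing R] (m : ℕ) [NeZero m] (ω : R)
    (A : ZMod m → R) (i : ZMod m) : R :=
  ∑ r : ZMod m, A (-r) * ω ^ (i.val * r.val)

/-! **Statement 3.** Let `R` be a halidon ring with index `m` and primitive `m`-th root
of unity `ω`, and `u = ∑ αᵢ a^(i-1) + ∑ α_{m+i} a^(i-1) b ∈ R[D_m]`. With
`λᵢ, γᵢ, δᵢ, ηᵢ` as above, if `λ_r η_r − γ_r δ_r` is a unit of `R` for every `r`, then
`u` is invertible in `R[D_m]`, with inverse `∑ βᵢ a^(i-1) + ∑ β_{m+i} a^(i-1) b` where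
`βᵢ = (1/m) ∑_r η_r (λ_r η_r − γ_r δ_r)⁻¹ ω^((i-1)(r-1))` and
`β_{m+i} = (1/m) ∑_r (−δ_r) (λ_r η_r − γ_r δ_r)⁻¹ ω^((i-1)(r-1))`. -/

/-! ### Auxiliary lemmas -/

section Helpers
set_option linter.unusedSectionVars false
variable {R : Type*} [CommRing R] (m : ℕ) [NeZero m] (ω : R)

private lemma halidon_pow_congr (h1 : ω ^ m = 1) {a b : ℕ} (h : (a : ZMod m) = (b : ZMod m)) :
    ω ^ a = ω ^ b := by
  have hmod : a % m = b % m := by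
    rwa [ZMod.natCast_eq_natCast_iff, Nat.ModEq] at h
  have key : ∀ c : ℕ, ω ^ c = ω ^ (c % m) := by
    intro c
    conv_lhs => rw [← Nat.div_add_mod c m, pow_add, pow_mul, h1, one_pow, one_mul]
  rw [key a, key b, hmod]

private lemma halidon_rev_eq_fwd_neg (h1 : ω ^ m = 1) (A : ZMod m → R) (j : ZMod m) :
    revDFT m ω A j = fwdDFT m ω A (-j) := by
  unfold revDFT fwdDFT
  rw [← Equiv.sum_comp (Equiv.neg (ZMod m)) (fun r => A r * ω ^ ((-j).val * r.val))]
  refine Finset.sum_congr rfl fun r _ => ?_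
  simp only [Equiv.neg_apply]
  congr 1
  apply halidon_pow_congr m ω h1
  push_cast [ZMod.natCast_val, ZMod.cast_id]
  ring

private lemma halidon_sum_zmod_range (f : ℕ → R) :
    (∑ i : ZMod m, f i.val) = ∑ r ∈ Finset.range m, f r := by
  refine Finset.sum_nbij' (fun i => i.val) (fun r => (r : ZMod m)) ?_ ?_ ?_ ?_ ?_
  · intro i _; exact Finset.mem_range.mpr (ZMod.val_lt i)
  · intro r _; exact Finset.mem_univ _
  · intro i _; exact ZMod.natCast_zmod_val i
  · intro r hr; exact ZMod.val_cast_of_lt (Finset.mem_range.mp hr)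
  · intro i _; rfl

private lemma halidon_orth
    (hω : ∀ k : ℕ, (∑ r ∈ Finset.range m, ω ^ (r * k)) = if m ∣ k then (m : R) else 0)
    (c : ZMod m) :
    (∑ i : ZMod m, ω ^ (i.val * c.val)) = if c = 0 then (m : R) else 0 := by
  rw [halidon_sum_zmod_range m (fun r => ω ^ (r * c.val)), hω c.val]
  congr 1
  rw [eq_iff_iff]
  constructor
  · intro hd
    exact (ZMod.val_eq_zero c).mp (Nat.eq_zero_of_dvd_of_lt hd (ZMod.val_lt c))
  · intro h; rw [h]; simp

private lemma halidon_fwd_of_inv (h1 : ω ^ m = 1)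
    (hω : ∀ k : ℕ, (∑ r ∈ Finset.range m, ω ^ (r * k)) = if m ∣ k then (m : R) else 0)
    (hm : IsUnit (m : R)) (f : ZMod m → R) (j : ZMod m) :
    fwdDFT m ω (fun i => Ring.inverse (m : R) * ∑ r : ZMod m, f r * ω ^ (i.val * r.val)) j
      = f (-j) := by
  unfold fwdDFT
  have step : ∀ i : ZMod m,
      (Ring.inverse (m : R) * ∑ r : ZMod m, f r * ω ^ (i.val * r.val)) * ω ^ (j.val * i.val)
        = Ring.inverse (m : R) * ∑ r : ZMod m, f r * ω ^ (i.val * (r + j).val) := by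
    intro i
    rw [mul_assoc, Finset.sum_mul]
    congr 1
    refine Finset.sum_congr rfl fun r _ => ?_
    rw [mul_assoc]
    congr 1
    rw [← pow_add]
    apply halidon_pow_congr m ω h1
    push_cast [ZMod.natCast_val, ZMod.cast_id]
    ring
  simp only [step]
  rw [← Finset.mul_sum, Finset.sum_comm]
  have inner : ∀ r : ZMod m, (∑ i : ZMod m, f r * ω ^ (i.val * (r + j).val))
      = f r * (if r + j = 0 then (m : R) else 0) := by
    intro r
    rw [← Finset.mul_sum, halidon_orth m ω hω]
  simp only [inner]
  have : ∀ x : ZMod m, (f x * if x + j = 0 then (m:R) else 0) = if x = -j then f x * m else 0 := by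
    intro x
    by_cases h : x = -j
    · simp [h]
    · have : ¬ (x + j = 0) := fun hc => h (by rw [eq_neg_iff_add_eq_zero]; exact hc)
      simp [h, this]
  simp only [this]
  rw [Finset.sum_ite_eq' Finset.univ (-j) (fun x => f x * (m:R)), if_pos (Finset.mem_univ _)]
  rw [mul_comm (f (-j)) ((m:R)), ← mul_assoc, mul_comm (Ring.inverse (m:R)) ((m:R)),
    Ring.mul_inverse_cancel _ hm, one_mul]

private lemma halidon_fwd_conv (h1 : ω ^ m = 1) (A P : ZMod m → R) (j : ZMod m) :
    fwdDFT m ω (fun k => ∑ i : ZMod m, A i * P (k - i)) j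
      = fwdDFT m ω A j * fwdDFT m ω P j := by
  unfold fwdDFT
  rw [Finset.sum_mul_sum]
  simp only [Finset.sum_mul]
  rw [Finset.sum_comm]
  refine Finset.sum_congr rfl fun i _ => ?_
  rw [← Equiv.sum_comp (Equiv.addLeft i) (fun k => A i * P (k - i) * ω ^ (j.val * k.val))]
  refine Finset.sum_congr rfl fun t _ => ?_
  simp only [Equiv.coe_addLeft, add_sub_cancel_left]
  have : ω ^ (j.val * (i + t).val) = ω ^ (j.val * i.val) * ω ^ (j.val * t.val) := by
    rw [← pow_add]
    apply halidon_pow_congr m ω h1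
    push_cast [ZMod.natCast_val, ZMod.cast_id]
    ring
  rw [this]; ring

private lemma halidon_fwd_conv_rev (h1 : ω ^ m = 1) (B Q : ZMod m → R) (j : ZMod m) :
    fwdDFT m ω (fun k => ∑ i : ZMod m, B i * Q (i - k)) j
      = fwdDFT m ω B j * revDFT m ω Q j := by
  unfold fwdDFT revDFT
  rw [Finset.sum_mul_sum]
  simp only [Finset.sum_mul]
  rw [Finset.sum_comm]
  refine Finset.sum_congr rfl fun i _ => ?_
  rw [← Equiv.sum_comp (Equiv.addLeft i) (fun k => B i * Q (i - k) * ω ^ (j.val * k.val))]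
  refine Finset.sum_congr rfl fun s _ => ?_
  simp only [Equiv.coe_addLeft]
  have h2 : i - (i + s) = -s := by ring
  rw [h2]
  have : ω ^ (j.val * (i + s).val) = ω ^ (j.val * i.val) * ω ^ (j.val * s.val) := by
    rw [← pow_add]
    apply halidon_pow_congr m ω h1
    push_cast [ZMod.natCast_val, ZMod.cast_id]
    ring
  rw [this]; ring

private lemma halidon_fwd_indicator (j : ZMod m) :
    fwdDFT m ω (fun k => if k = (0 : ZMod m) then (1:R) else 0) j = 1 := by
  unfold fwdDFT
  have : ∀ k : ZMod m, ((if k = (0:ZMod m) then (1:R) else 0) * ω ^ (j.val * k.val))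
      = if k = 0 then ω ^ (j.val * k.val) else 0 := by
    intro k; by_cases h : k = 0 <;> simp [h]
  simp only [this]
  rw [Finset.sum_ite_eq' Finset.univ (0 : ZMod m) (fun k => ω ^ (j.val * k.val)),
    if_pos (Finset.mem_univ _)]
  simp

private lemma halidon_fwd_zero (j : ZMod m) :
    fwdDFT m ω (fun _ => (0:R)) j = 0 := by
  unfold fwdDFT
  simp

private lemma halidon_fwd_add (X Y : ZMod m → R) (j : ZMod m) :
    fwdDFT m ω (fun k => X k + Y k) j = fwdDFT m ω X j + fwdDFT m ω Y j := by
  unfold fwdDFT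
  rw [← Finset.sum_add_distrib]
  exact Finset.sum_congr rfl fun k _ => by ring

private lemma halidon_fwd_injective (h1 : ω ^ m = 1)
    (hω : ∀ k : ℕ, (∑ r ∈ Finset.range m, ω ^ (r * k)) = if m ∣ k then (m : R) else 0)
    (hm : IsUnit (m : R)) (X Y : ZMod m → R)
    (h : ∀ j, fwdDFT m ω X j = fwdDFT m ω Y j) : X = Y := by
  have inv : ∀ Z : ZMod m → R, ∀ k : ZMod m,
      (m : R) * Z k = ∑ j : ZMod m, fwdDFT m ω Z j * ω ^ (j.val * (-k).val) := by
    intro Z k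
    unfold fwdDFT
    simp only [Finset.sum_mul]
    have step : ∀ r j : ZMod m, Z r * ω ^ (j.val * r.val) * ω ^ (j.val * (-k).val)
        = Z r * ω ^ (j.val * (r - k).val) := by
      intro r j
      rw [mul_assoc, ← pow_add]
      congr 1
      apply halidon_pow_congr m ω h1
      push_cast [ZMod.natCast_val, ZMod.cast_id]
      ring
    simp only [step]
    have inner : ∀ r : ZMod m, (∑ j : ZMod m, Z r * ω ^ (j.val * (r - k).val))
        = Z r * (if r - k = 0 then (m:R) else 0) := by
      intro r; rw [← Finset.mul_sum, halidon_orth m ω hω]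
    rw [Finset.sum_comm]
    simp only [inner]
    have : ∀ r : ZMod m, (Z r * if r - k = 0 then (m:R) else 0)
        = if r = k then Z r * m else 0 := by
      intro r; by_cases h : r = k
      · simp [h]
      · simp [h, sub_eq_zero, if_neg]
    simp only [this]
    rw [Finset.sum_ite_eq' Finset.univ k (fun r => Z r * (m:R)), if_pos (Finset.mem_univ _)]
    ring
  funext k
  have h2 : (m:R) * X k = (m:R) * Y k := by
    rw [inv X k, inv Y k]
    exact Finset.sum_congr rfl fun j _ => by rw [h j]
  exact hm.mul_left_cancel h2

end Helpers

section DihedralHelpers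
set_option linter.unusedSectionVars false
variable {R : Type*} [CommRing R] (m : ℕ) [NeZero m]
open DihedralGroup MonoidAlgebra

private lemma dihedralElt_eq (A B : ZMod m → R) :
    dihedralElt m A B = (∑ i : ZMod m, single (r i) (A i)) +
      ∑ i : ZMod m, single (sr i) (B (-i)) := by
  unfold dihedralElt
  congr 1
  simp only [r_mul_sr, zero_sub]
  rw [← Equiv.sum_comp (Equiv.neg (ZMod m)) (fun i => single (sr i) (B (-i)))]
  simp

private lemma dihedralElt_mul (A B P Q : ZMod m → R) :
    dihedralElt m A B * dihedralElt m P Q =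
      dihedralElt m
        (fun k => (∑ i : ZMod m, A i * P (k - i)) + ∑ i : ZMod m, B i * Q (i - k))
        (fun n => (∑ i : ZMod m, A i * Q (n - i)) + ∑ i : ZMod m, B i * P (i - n)) := by
  rw [dihedralElt_eq, dihedralElt_eq, dihedralElt_eq]
  have hAP : (∑ i : ZMod m, single (r i) (A i)) * (∑ j : ZMod m, single (r j) (P j))
      = ∑ k : ZMod m, single (DihedralGroup.r k) (∑ i : ZMod m, A i * P (k - i)) :=
    calc (∑ i : ZMod m, single (r i) (A i)) * (∑ j : ZMod m, single (r j) (P j))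
        = ∑ i : ZMod m, ∑ j : ZMod m, single (r (i + j)) (A i * P j) := by
          rw [Finset.sum_mul_sum]
          simp only [MonoidAlgebra.single_mul_single, r_mul_r]
      _ = ∑ i : ZMod m, ∑ k : ZMod m, single (r k) (A i * P (k - i)) :=
          Finset.sum_congr rfl fun i _ => by
            rw [← Equiv.sum_comp (Equiv.addLeft i)
              (fun k => single (M := DihedralGroup m) (r k) (A i * P (k - i)))]
            simp
      _ = ∑ k : ZMod m, ∑ i : ZMod m, single (r k) (A i * P (k - i)) := Finset.sum_comm
      _ = ∑ k : ZMod m, single (r k) (∑ i : ZMod m, A i * P (k - i)) :=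
          Finset.sum_congr rfl fun k _ =>
            (map_sum (MonoidAlgebra.singleAddHom (r k)) _ Finset.univ).symm
  have hBQ : (∑ i : ZMod m, single (sr i) (B (-i))) * (∑ j : ZMod m, single (sr j) (Q (-j)))
      = ∑ k : ZMod m, single (DihedralGroup.r k) (∑ i : ZMod m, B i * Q (i - k)) :=
    calc (∑ i : ZMod m, single (sr i) (B (-i))) * (∑ j : ZMod m, single (sr j) (Q (-j)))
        = ∑ i : ZMod m, ∑ j : ZMod m, single (r (j - i)) (B (-i) * Q (-j)) := by
          rw [Finset.sum_mul_sum]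
          simp only [MonoidAlgebra.single_mul_single, sr_mul_sr]
      _ = ∑ s : ZMod m, ∑ j : ZMod m, single (r (j + s)) (B s * Q (-j)) := by
          rw [← Equiv.sum_comp (Equiv.neg (ZMod m))
            (fun i => ∑ j : ZMod m, single (M := DihedralGroup m) (r (j - i)) (B (-i) * Q (-j)))]
          refine Finset.sum_congr rfl fun s _ => Finset.sum_congr rfl fun j _ => ?_
          simp only [Equiv.neg_apply, neg_neg, sub_neg_eq_add]
      _ = ∑ s : ZMod m, ∑ k : ZMod m, single (r k) (B s * Q (s - k)) :=
          Finset.sum_congr rfl fun s _ => by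
            rw [← Equiv.sum_comp (Equiv.addRight s)
              (fun k => single (M := DihedralGroup m) (r k) (B s * Q (s - k)))]
            refine Finset.sum_congr rfl fun j _ => ?_
            simp only [Equiv.coe_addRight]
            congr 2
            ring
      _ = ∑ k : ZMod m, ∑ s : ZMod m, single (r k) (B s * Q (s - k)) := Finset.sum_comm
      _ = ∑ k : ZMod m, single (r k) (∑ s : ZMod m, B s * Q (s - k)) :=
          Finset.sum_congr rfl fun k _ =>
            (map_sum (MonoidAlgebra.singleAddHom (r k)) _ Finset.univ).symm
  have hAQ : (∑ i : ZMod m, single (r i) (A i)) * (∑ j : ZMod m, single (sr j) (Q (-j)))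
      = ∑ k : ZMod m, single (DihedralGroup.sr k) (∑ i : ZMod m, A i * Q (-k - i)) :=
    calc (∑ i : ZMod m, single (r i) (A i)) * (∑ j : ZMod m, single (sr j) (Q (-j)))
        = ∑ i : ZMod m, ∑ j : ZMod m, single (sr (j - i)) (A i * Q (-j)) := by
          rw [Finset.sum_mul_sum]
          simp only [MonoidAlgebra.single_mul_single, r_mul_sr]
      _ = ∑ i : ZMod m, ∑ k : ZMod m, single (sr k) (A i * Q (-k - i)) :=
          Finset.sum_congr rfl fun i _ => by
            rw [← Equiv.sum_comp (Equiv.subRight i)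
              (fun k => single (M := DihedralGroup m) (sr k) (A i * Q (-k - i)))]
            refine Finset.sum_congr rfl fun j _ => ?_
            simp only [Equiv.subRight_apply]
            congr 2
            ring
      _ = ∑ k : ZMod m, ∑ i : ZMod m, single (sr k) (A i * Q (-k - i)) := Finset.sum_comm
      _ = ∑ k : ZMod m, single (sr k) (∑ i : ZMod m, A i * Q (-k - i)) :=
          Finset.sum_congr rfl fun k _ =>
            (map_sum (MonoidAlgebra.singleAddHom (sr k)) _ Finset.univ).symm
  have hBP : (∑ i : ZMod m, single (sr i) (B (-i))) * (∑ j : ZMod m, single (r j) (P j))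
      = ∑ k : ZMod m, single (DihedralGroup.sr k) (∑ s : ZMod m, B s * P (k + s)) :=
    calc (∑ i : ZMod m, single (sr i) (B (-i))) * (∑ j : ZMod m, single (r j) (P j))
        = ∑ i : ZMod m, ∑ j : ZMod m, single (sr (i + j)) (B (-i) * P j) := by
          rw [Finset.sum_mul_sum]
          simp only [MonoidAlgebra.single_mul_single, sr_mul_r]
      _ = ∑ s : ZMod m, ∑ j : ZMod m, single (sr (j - s)) (B s * P j) := by
          rw [← Equiv.sum_comp (Equiv.neg (ZMod m))
            (fun i => ∑ j : ZMod m, single (M := DihedralGroup m) (sr (i + j)) (B (-i) * P j))]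
          refine Finset.sum_congr rfl fun s _ => Finset.sum_congr rfl fun j _ => ?_
          simp only [Equiv.neg_apply, neg_neg]
          congr 2
          ring
      _ = ∑ s : ZMod m, ∑ k : ZMod m, single (sr k) (B s * P (k + s)) :=
          Finset.sum_congr rfl fun s _ => by
            rw [← Equiv.sum_comp (Equiv.subRight s)
              (fun k => single (M := DihedralGroup m) (sr k) (B s * P (k + s)))]
            refine Finset.sum_congr rfl fun j _ => ?_
            simp only [Equiv.subRight_apply]
            congr 2
            ring
      _ = ∑ k : ZMod m, ∑ s : ZMod m, single (sr k) (B s * P (k + s)) := Finset.sum_comm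
      _ = ∑ k : ZMod m, single (sr k) (∑ s : ZMod m, B s * P (k + s)) :=
          Finset.sum_congr rfl fun k _ =>
            (map_sum (MonoidAlgebra.singleAddHom (sr k)) _ Finset.univ).symm
  rw [add_mul, mul_add, mul_add, hAP, hBQ, hAQ, hBP]
  have hr' : (∑ k : ZMod m, single (DihedralGroup.r k) (∑ i : ZMod m, A i * P (k - i)))
      + ∑ k : ZMod m, single (DihedralGroup.r k) (∑ i : ZMod m, B i * Q (i - k))
      = ∑ k : ZMod m, single (DihedralGroup.r k)
          ((∑ i : ZMod m, A i * P (k - i)) + ∑ i : ZMod m, B i * Q (i - k)) := by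
    rw [← Finset.sum_add_distrib]
    exact Finset.sum_congr rfl fun k _ => (MonoidAlgebra.single_add _ _ _).symm
  have hs' : (∑ k : ZMod m, single (DihedralGroup.sr k) (∑ i : ZMod m, A i * Q (-k - i)))
      + ∑ k : ZMod m, single (DihedralGroup.sr k) (∑ s : ZMod m, B s * P (k + s))
      = ∑ k : ZMod m, single (DihedralGroup.sr k)
          ((∑ i : ZMod m, A i * Q (-k - i)) + ∑ i : ZMod m, B i * P (i - -k)) := by
    rw [← Finset.sum_add_distrib]
    refine Finset.sum_congr rfl fun k _ => ?_
    rw [← MonoidAlgebra.single_add]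
    congr 2
    refine Finset.sum_congr rfl fun i _ => ?_
    congr 1
    ring
  rw [← hr', ← hs']
  abel

private lemma dihedralElt_one :
    dihedralElt m (fun k => if k = (0 : ZMod m) then (1:R) else 0) (fun _ => (0:R)) = 1 := by
  rw [dihedralElt_eq]
  have h2 : (∑ i : ZMod m, single (M := DihedralGroup m) (sr i) (0:R)) = 0 := by
    simp
  rw [h2, add_zero]
  rw [Finset.sum_eq_single (0 : ZMod m)]
  · rw [if_pos rfl, MonoidAlgebra.one_def]; rfl
  · intro b _ hb; simp [hb]
  · intro h; exact absurd (Finset.mem_univ _) h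

end DihedralHelpers

/-- The determinant-like quantity `λ_r η_r - γ_r δ_r`. -/
noncomputable def halidonDet {R : Type*} [CommRing R] (m : ℕ) [NeZero m] (ω : R)
    (A B : ZMod m → R) (r : ZMod m) : R :=
  revDFT m ω A r * fwdDFT m ω A r - fwdDFT m ω B r * revDFT m ω B r


theorem dihedral_inverse_formula
    {R : Type*} [CommRing R] (m : ℕ) [NeZero m] (ω : R)
    (hω : IsHalidonPrimitiveRoot m ω) (hm : IsUnit (m : R))
    (A B : ZMod m → R)
    (hunit : ∀ r : ZMod m,
      IsUnit (revDFT m ω A r * fwdDFT m ω A r -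
        fwdDFT m ω B r * revDFT m ω B r)) :
    IsUnit (dihedralElt m A B) ∧
    dihedralElt m A B *
      dihedralElt m
        (fun i => Ring.inverse (m : R) *
          ∑ r : ZMod m, fwdDFT m ω A r *
            Ring.inverse (revDFT m ω A r * fwdDFT m ω A r -
              fwdDFT m ω B r * revDFT m ω B r) * ω ^ (i.val * r.val))
        (fun i => Ring.inverse (m : R) *
          ∑ r : ZMod m, (-(revDFT m ω B r)) *
            Ring.inverse (revDFT m ω A r * fwdDFT m ω A r -
              fwdDFT m ω B r * revDFT m ω B r) * ω ^ (i.val * r.val)) = 1 ∧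
    dihedralElt m
        (fun i => Ring.inverse (m : R) *
          ∑ r : ZMod m, fwdDFT m ω A r *
            Ring.inverse (revDFT m ω A r * fwdDFT m ω A r -
              fwdDFT m ω B r * revDFT m ω B r) * ω ^ (i.val * r.val))
        (fun i => Ring.inverse (m : R) *
          ∑ r : ZMod m, (-(revDFT m ω B r)) *
            Ring.inverse (revDFT m ω A r * fwdDFT m ω A r -
              fwdDFT m ω B r * revDFT m ω B r) * ω ^ (i.val * r.val)) *
      dihedralElt m A B = 1 := by
  obtain ⟨hmpos, h1, hmin, horth⟩ := hω
  -- Abbreviate the candidate-inverse coefficient functions.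
  set P : ZMod m → R := fun i => Ring.inverse (m : R) *
      ∑ r : ZMod m, fwdDFT m ω A r *
        Ring.inverse (revDFT m ω A r * fwdDFT m ω A r -
          fwdDFT m ω B r * revDFT m ω B r) * ω ^ (i.val * r.val) with hPdef
  set Q : ZMod m → R := fun i => Ring.inverse (m : R) *
      ∑ r : ZMod m, (-(revDFT m ω B r)) *
        Ring.inverse (revDFT m ω A r * fwdDFT m ω A r -
          fwdDFT m ω B r * revDFT m ω B r) * ω ^ (i.val * r.val) with hQdef
  have hrev : ∀ (X : ZMod m → R) (j : ZMod m), revDFT m ω X j = fwdDFT m ω X (-j) :=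
    fun X j => halidon_rev_eq_fwd_neg m ω h1 X j
  have hDrw : ∀ j : ZMod m,
      revDFT m ω A j * fwdDFT m ω A j - fwdDFT m ω B j * revDFT m ω B j
        = fwdDFT m ω A (-j) * fwdDFT m ω A j - fwdDFT m ω B j * fwdDFT m ω B (-j) := by
    intro j
    rw [hrev A j, hrev B j]
  have hDsymm : ∀ j : ZMod m,
      revDFT m ω A (-j) * fwdDFT m ω A (-j) - fwdDFT m ω B (-j) * revDFT m ω B (-j)
        = revDFT m ω A j * fwdDFT m ω A j - fwdDFT m ω B j * revDFT m ω B j := by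
    intro j
    rw [hDrw j, hDrw (-j), neg_neg]
    ring
  have hP : ∀ j : ZMod m, fwdDFT m ω P j
      = fwdDFT m ω A (-j) * Ring.inverse (revDFT m ω A j * fwdDFT m ω A j -
          fwdDFT m ω B j * revDFT m ω B j) := by
    intro j
    have h := halidon_fwd_of_inv m ω h1 horth hm
      (fun r => fwdDFT m ω A r * Ring.inverse (revDFT m ω A r * fwdDFT m ω A r -
        fwdDFT m ω B r * revDFT m ω B r)) j
    rw [hPdef]
    rw [h, hDsymm j]
  have hQ : ∀ j : ZMod m, fwdDFT m ω Q j
      = -(fwdDFT m ω B j) * Ring.inverse (revDFT m ω A j * fwdDFT m ω A j -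
          fwdDFT m ω B j * revDFT m ω B j) := by
    intro j
    have h := halidon_fwd_of_inv m ω h1 horth hm
      (fun r => (-(revDFT m ω B r)) * Ring.inverse (revDFT m ω A r * fwdDFT m ω A r -
        fwdDFT m ω B r * revDFT m ω B r)) j
    rw [hQdef]
    rw [h, hDsymm j, hrev B (-j), neg_neg]
  have hDinv : ∀ j : ZMod m,
      (fwdDFT m ω A (-j) * fwdDFT m ω A j - fwdDFT m ω B j * fwdDFT m ω B (-j)) *
        Ring.inverse (revDFT m ω A j * fwdDFT m ω A j -
          fwdDFT m ω B j * revDFT m ω B j) = 1 := by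
    intro j
    rw [← hDrw j]
    exact Ring.mul_inverse_cancel _ (hunit j)
  -- The forward product
  have huv : dihedralElt m A B * dihedralElt m P Q = 1 := by
    rw [dihedralElt_mul]
    have e1 : (fun k => (∑ i : ZMod m, A i * P (k - i)) + ∑ i : ZMod m, B i * Q (i - k))
        = fun k => if k = (0 : ZMod m) then (1:R) else 0 := by
      apply halidon_fwd_injective m ω h1 horth hm
      intro j
      rw [halidon_fwd_add, halidon_fwd_conv m ω h1, halidon_fwd_conv_rev m ω h1,
        halidon_fwd_indicator]
      rw [hP j, hrev Q j, hQ (-j), hDsymm j]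
      have key := hDinv j
      linear_combination key
    have e2 : (fun n => (∑ i : ZMod m, A i * Q (n - i)) + ∑ i : ZMod m, B i * P (i - n))
        = fun _ => (0:R) := by
      apply halidon_fwd_injective m ω h1 horth hm
      intro j
      rw [halidon_fwd_add, halidon_fwd_conv m ω h1, halidon_fwd_conv_rev m ω h1,
        halidon_fwd_zero]
      rw [hQ j, hrev P j, hP (-j), hDsymm j, neg_neg]
      ring
    rw [e1, e2]
    exact dihedralElt_one m
  -- The reverse product
  have hvu : dihedralElt m P Q * dihedralElt m A B = 1 := by
    rw [dihedralElt_mul]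
    have e1 : (fun k => (∑ i : ZMod m, P i * A (k - i)) + ∑ i : ZMod m, Q i * B (i - k))
        = fun k => if k = (0 : ZMod m) then (1:R) else 0 := by
      apply halidon_fwd_injective m ω h1 horth hm
      intro j
      rw [halidon_fwd_add, halidon_fwd_conv m ω h1, halidon_fwd_conv_rev m ω h1,
        halidon_fwd_indicator]
      have key := hDinv j
      rw [hP j, hQ j]
      set d := Ring.inverse (revDFT m ω A j * fwdDFT m ω A j -
        fwdDFT m ω B j * revDFT m ω B j) with hd
      rw [hrev B j]
      linear_combination key
    have e2 : (fun n => (∑ i : ZMod m, P i * B (n - i)) + ∑ i : ZMod m, Q i * A (i - n))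
        = fun _ => (0:R) := by
      apply halidon_fwd_injective m ω h1 horth hm
      intro j
      rw [halidon_fwd_add, halidon_fwd_conv m ω h1, halidon_fwd_conv_rev m ω h1,
        halidon_fwd_zero]
      rw [hP j, hQ j]
      set d := Ring.inverse (revDFT m ω A j * fwdDFT m ω A j -
        fwdDFT m ω B j * revDFT m ω B j) with hd
      rw [hrev A j]
      ring
    rw [e1, e2]
    exact dihedralElt_one m
  exact ⟨⟨⟨dihedralElt m A B, dihedralElt m P Q, huv, hvu⟩, rfl⟩, huv, hvu⟩
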